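/- Let G = (V, E) be an undirected graph and k ≥ 3. There exist k−1 DFA A_0, ..., A_{k−2} over alphabet V, each with O(|V|) states, such that ⋂_{i} L(A_i) ≠ ∅ if and only if G contains a k-clique. Specifically, the words in the intersection are exactly the words v_0 v_1 ... v_{k−1} of length k over V such that {v_0, ..., v_{k−1}} are pairwise adjacent vertices of G. -/

import Mathlib

open scoped Classical

namespace CliqueDFA

variable {V : Type*} [Fintype V] [DecidableEq V] (G : SimpleGraph V)

/-- Letter at position `i` is adjacent to all later letters. -/
def Cond (i : ℕ) (w : List V) : Prop :=
  ∀ j, (hj : j < w.length) → (hi : i < w.length) → i < j → G.Adj w[i] w[j]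

lemma cond_nil (i : ℕ) : Cond G i ([] : List V) := by
  intro j hj hi hij; simp at hj

lemma cond_short {i : ℕ} {w : List V} (h : w.length ≤ i + 1) : Cond G i w := by
  intro j hj hi hij; omega

lemma cond_append {i : ℕ} {w : List V} {a : V} :
    Cond G i (w ++ [a]) ↔ Cond G i w ∧ ∀ (hi : i < w.length), G.Adj w[i] a := by
  constructor
  · intro h
    refine ⟨fun j hj hi hij => ?_, fun hi => ?_⟩
    · have := h j (by simp; omega) (by simp; omega) hij
      simpa [List.getElem_append_left, hj, hi] using this
    · have := h w.length (by simp) (by simp; omega) hi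
      simpa [List.getElem_append_left, hi, List.getElem_concat_length] using this
  · rintro ⟨h1, h2⟩ j hj hi hij
    simp only [List.length_append, List.length_singleton] at hj hi
    rcases lt_or_eq_of_le (Nat.lt_succ_iff.mp hj) with hj' | hj'
    · have := h1 j hj' (by omega) hij
      simpa [List.getElem_append_left, hj', (by omega : i < w.length)] using this
    · subst hj'
      have := h2 (by omega)
      simpa [List.getElem_append_left, (by omega : i < w.length),
        List.getElem_concat_length] using this

/-- DFA checking that the letter at position `i` is adjacent to all later letters. -/
noncomputable def adjDFA (i : ℕ) : DFA V (Option ((Fin (i + 1) ⊕ V) ⊕ Unit)) where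
  step q a :=
    match q with
    | none => none
    | some (Sum.inl (Sum.inl c)) =>
        if h : (c : ℕ) < i then some (Sum.inl (Sum.inl ⟨c + 1, by omega⟩))
        else some (Sum.inl (Sum.inr a))
    | some (Sum.inl (Sum.inr v)) => if G.Adj v a then some (Sum.inl (Sum.inr v)) else none
    | some (Sum.inr _) => none
  start := some (Sum.inl (Sum.inl ⟨0, by omega⟩))
  accept := {q | q ≠ none}

/-- Intended state of `adjDFA` after reading `w`. -/
noncomputable def adjState (i : ℕ) (w : List V) : Option ((Fin (i + 1) ⊕ V) ⊕ Unit) :=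
  if h : w.length ≤ i then some (Sum.inl (Sum.inl ⟨w.length, by omega⟩))
  else if Cond G i w then some (Sum.inl (Sum.inr (w[i]'(by omega)))) else none

lemma adjDFA_eval (i : ℕ) (w : List V) : (adjDFA G i).eval w = adjState G i w := by
  induction w using List.reverseRecOn with
  | nil =>
      simp [adjState, DFA.eval, DFA.evalFrom, adjDFA]
  | append_singleton w a ih =>
      rw [DFA.eval_append_singleton, ih]
      unfold adjState
      have hlen : (w ++ [a]).length = w.length + 1 := by simp
      by_cases h1 : w.length ≤ i
      · rcases lt_or_eq_of_le h1 with h2 | h2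
        · simp only [dif_pos h1, adjDFA]
          rw [dif_pos (show w.length < i from h2), dif_pos (show (w ++ [a]).length ≤ i by omega)]
          simp [Fin.ext_iff]
        · -- w.length = i : transition to memorized letter
          simp only [dif_pos h1, adjDFA]
          rw [dif_neg (show ¬ w.length < i by omega),
            dif_neg (show ¬ (w ++ [a]).length ≤ i by omega),
            if_pos (cond_short G (by omega))]
          congr 3
          exact (List.getElem_concat_length (l := w) (a := a) (i := i) h2.symm _).symm
      · -- i < w.length
        rw [dif_neg h1, dif_neg (show ¬ (w ++ [a]).length ≤ i by omega)]
        by_cases h2 : Cond G i w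
        · rw [if_pos h2]
          by_cases h3 : G.Adj (w[i]'(by omega)) a
          · rw [if_pos ((cond_append G).mpr ⟨h2, fun _ => h3⟩)]
            simp only [adjDFA, if_pos h3]
            congr 3
            exact (List.getElem_append_left (by omega)).symm
          · rw [if_neg (fun hc => h3 (((cond_append G).mp hc).2 (by omega)))]
            simp only [adjDFA, if_neg h3]
        · rw [if_neg h2, if_neg (fun hc => h2 ((cond_append G).mp hc).1)]
          rfl

lemma adjDFA_accepts (i : ℕ) (w : List V) :
    w ∈ (adjDFA G i).accepts ↔ Cond G i w := by
  rw [DFA.mem_accepts, adjDFA_eval]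
  unfold adjState
  by_cases h1 : w.length ≤ i
  · simp only [dif_pos h1]
    exact ⟨fun _ => cond_short G (by omega), fun _ => by simp [adjDFA]⟩
  · simp only [dif_neg h1]
    by_cases h2 : Cond G i w
    · simp [h2, adjDFA]
    · simp [h2, adjDFA]

/-- DFA checking that a word has length exactly `p + 2` and its letters at positions
`p` and `p+1` are adjacent. -/
noncomputable def lastDFA (p : ℕ) : DFA V (Option ((Fin (p + 1) ⊕ V) ⊕ Unit)) where
  step q a :=
    match q with
    | none => none
    | some (Sum.inl (Sum.inl c)) =>
        if h : (c : ℕ) < p then some (Sum.inl (Sum.inl ⟨c + 1, by omega⟩))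
        else some (Sum.inl (Sum.inr a))
    | some (Sum.inl (Sum.inr v)) => if G.Adj v a then some (Sum.inr ()) else none
    | some (Sum.inr _) => none
  start := some (Sum.inl (Sum.inl ⟨0, by omega⟩))
  accept := {some (Sum.inr ())}

noncomputable def lastState (p : ℕ) (w : List V) : Option ((Fin (p + 1) ⊕ V) ⊕ Unit) :=
  if h : w.length ≤ p then some (Sum.inl (Sum.inl ⟨w.length, by omega⟩))
  else if h2 : w.length = p + 1 then some (Sum.inl (Sum.inr (w[p]'(by omega))))
  else if w.length = p + 2 ∧ G.Adj (w[p]'(by omega)) (w[p+1]'(by omega)) then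
    some (Sum.inr ()) else none

lemma lastDFA_eval (p : ℕ) (w : List V) : (lastDFA G p).eval w = lastState G p w := by
  induction w using List.reverseRecOn with
  | nil => simp [lastState, DFA.eval, DFA.evalFrom, lastDFA]
  | append_singleton w a ih =>
      rw [DFA.eval_append_singleton, ih]
      unfold lastState
      have hlen : (w ++ [a]).length = w.length + 1 := by simp
      by_cases h1 : w.length ≤ p
      · rcases lt_or_eq_of_le h1 with h2 | h2
        · simp only [dif_pos h1, lastDFA]
          rw [dif_pos (show w.length < p from h2), dif_pos (show (w ++ [a]).length ≤ p by omega)]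
          simp [Fin.ext_iff]
        · simp only [dif_pos h1, lastDFA]
          rw [dif_neg (show ¬ w.length < p by omega),
            dif_neg (show ¬ (w ++ [a]).length ≤ p by omega),
            dif_pos (show (w ++ [a]).length = p + 1 by omega)]
          congr 3
          exact (List.getElem_concat_length (l := w) (a := a) (i := p) h2.symm _).symm
      · rw [dif_neg h1, dif_neg (show ¬ (w ++ [a]).length ≤ p by omega)]
        by_cases h2 : w.length = p + 1
        · rw [dif_pos h2,
            dif_neg (show ¬ (w ++ [a]).length = p + 1 by omega)]
          have hget : (w ++ [a])[p]'(by omega) = w[p]'(by omega) :=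
            List.getElem_append_left (by omega)
          have hget2 : (w ++ [a])[p+1]'(by omega) = a :=
            List.getElem_concat_length (l := w) (a := a) (i := p+1) (by omega) _
          by_cases h3 : G.Adj (w[p]'(by omega)) a
          · rw [if_pos (by refine ⟨by omega, ?_⟩; rw [hget, hget2]; exact h3)]
            simp only [lastDFA, if_pos h3]
          · rw [if_neg (by rintro ⟨-, hadj⟩; rw [hget, hget2] at hadj; exact h3 hadj)]
            simp only [lastDFA, if_neg h3]
        · rw [dif_neg h2, dif_neg (show ¬ (w ++ [a]).length = p + 1 by omega)]
          have hfalse : (w ++ [a]).length ≠ p + 2 := by omega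
          conv_rhs => rw [if_neg (fun hc => hfalse hc.1)]
          split <;> rfl

lemma lastDFA_accepts (p : ℕ) (w : List V) :
    w ∈ (lastDFA G p).accepts ↔
      w.length = p + 2 ∧ ∀ (h : w.length = p + 2), G.Adj (w[p]'(by omega)) (w[p+1]'(by omega)) := by
  rw [DFA.mem_accepts, lastDFA_eval]
  unfold lastState
  by_cases h1 : w.length ≤ p
  · simp only [dif_pos h1, lastDFA]
    constructor
    · intro h; simp at h
    · rintro ⟨hl, -⟩; omega
  · simp only [dif_neg h1]
    by_cases h2 : w.length = p + 1
    · simp only [dif_pos h2, lastDFA]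
      constructor
      · intro h; simp at h
      · rintro ⟨hl, -⟩; omega
    · simp only [dif_neg h2]
      by_cases h3 : w.length = p + 2 ∧ G.Adj (w[p]'(by omega)) (w[p+1]'(by omega))
      · rw [if_pos h3]
        simp only [lastDFA, Set.mem_singleton_iff]
        exact ⟨fun _ => ⟨h3.1, fun _ => h3.2⟩, fun _ => trivial⟩
      · rw [if_neg h3]
        simp only [lastDFA, Set.mem_singleton_iff]
        constructor
        · intro h; exact absurd h (by simp)
        · rintro ⟨hl, hadj⟩; exact absurd ⟨hl, hadj hl⟩ h3

section Reindex

variable {A S T : Type*}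

noncomputable def reindex (e : S ≃ T) (M : DFA A S) : DFA A T where
  step q a := e (M.step (e.symm q) a)
  start := e M.start
  accept := e.symm ⁻¹' M.accept

lemma reindex_evalFrom (e : S ≃ T) (M : DFA A S) (s : T) (w : List A) :
    (reindex e M).evalFrom s w = e (M.evalFrom (e.symm s) w) := by
  induction w generalizing s with
  | nil => simp [DFA.evalFrom, reindex]
  | cons a w ih =>
      simp only [DFA.evalFrom, List.foldl_cons] at ih ⊢
      rw [ih]
      simp [reindex, DFA.evalFrom]

lemma reindex_accepts (e : S ≃ T) (M : DFA A S) :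
    (reindex e M).accepts = M.accepts := by
  ext w
  rw [DFA.mem_accepts, DFA.mem_accepts, DFA.eval, DFA.eval, reindex_evalFrom]
  simp [reindex]

end Reindex

end CliqueDFA

open CliqueDFA in
/-- For an undirected graph `G` on vertex set `V` and `k ≥ 3`, there exist
`k-1` DFA over the alphabet `V`, each with `O(|V|)` states, whose languages
intersect in exactly the words `v₀v₁⋯v_{k-1}` of length `k` whose letters are
pairwise adjacent vertices of `G`; in particular the intersection is nonempty
iff `G` contains a `k`-clique. -/
theorem dfa_intersection_kClique {V : Type*} [Fintype V] [DecidableEq V]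
    (G : SimpleGraph V) (k : ℕ) (hk : 3 ≤ k) :
    ∃ (S : Fin (k - 1) → Type) (_ : ∀ i, Fintype (S i)) (M : ∀ i, DFA V (S i)),
      (∀ i, Fintype.card (S i) ≤ 2 * Fintype.card V + k + 1) ∧
      (⋂ i, ((M i).accepts : Set (List V))) =
        {w : List V | w.length = k ∧ w.Pairwise G.Adj} ∧
      ((⋂ i, ((M i).accepts : Set (List V))).Nonempty ↔
        ∃ s : Finset V, G.IsNClique k s) := by
  obtain ⟨n, rfl⟩ : ∃ n, k = n + 3 := ⟨k - 3, by omega⟩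
  have key : (⋂ i : Fin (n + 3 - 1),
      (((if (i : ℕ) < n + 1 then adjDFA G (i : ℕ) else lastDFA G (i : ℕ)).accepts)
      : Set (List V))) = {w : List V | w.length = n + 3 ∧ w.Pairwise G.Adj} := by
    ext w
    rw [Set.mem_setOf_eq]; refine Set.mem_iInter.trans (Iff.trans (forall_congr' fun i => Iff.rfl :
      (∀ i, _) ↔ ∀ i : Fin (n + 3 - 1), w ∈ (if (i : ℕ) < n + 1 then adjDFA G (i : ℕ) else lastDFA G (i : ℕ)).accepts) ?_)
    constructor
    · intro h
      have hlast := h (Fin.last (n + 1))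
      rw [if_neg (by simp)] at hlast
      rw [lastDFA_accepts] at hlast
      simp only [Fin.val_last] at hlast
      obtain ⟨hlen, hadj⟩ := hlast
      have hlen' : w.length = n + 3 := by omega
      refine ⟨hlen', ?_⟩
      rw [List.pairwise_iff_getElem]
      intro a b ha hb hab
      by_cases hcase : a < n + 1
      · have hi := h ⟨a, by omega⟩
        rw [if_pos hcase, adjDFA_accepts] at hi
        exact hi b hb (by omega) hab
      · have ha' : a = n + 1 := by omega
        have hb' : b = n + 2 := by omega
        subst ha'; subst hb'
        exact hadj (by omega)
    · rintro ⟨hlen, hpw⟩ i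
      rw [List.pairwise_iff_getElem] at hpw
      by_cases hcase : (i : ℕ) < n + 1
      · rw [if_pos hcase, adjDFA_accepts]
        intro j hj hi hij
        exact hpw _ j hi hj hij
      · rw [if_neg hcase, lastDFA_accepts]
        have hi : (i : ℕ) = n + 1 := by have := i.isLt; omega
        refine ⟨by omega, fun hl => ?_⟩
        exact hpw _ _ (by omega) (by omega) (by omega)
  refine ⟨fun i => Option ((Fin ((i : ℕ) + 1) ⊕ Fin (Fintype.card V)) ⊕ Unit),
    fun i => inferInstance,
    fun i => reindex
      (Equiv.optionCongr (((Equiv.refl (Fin ((i : ℕ) + 1))).sumCongr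
        (Fintype.equivFin V)).sumCongr (Equiv.refl Unit)))
      (if (i : ℕ) < n + 1 then adjDFA G (i : ℕ) else lastDFA G (i : ℕ)), ?_, ?_, ?_⟩
  · intro i
    have := i.isLt
    simp only [Fintype.card_option, Fintype.card_sum, Fintype.card_fin, Fintype.card_unit]
    omega
  · simpa only [reindex_accepts] using key
  · simp only [reindex_accepts]
    rw [key]
    constructor
    · rintro ⟨w, hlen, hpw⟩
      refine ⟨w.toFinset, ?_, ?_⟩
      · intro x hx y hy hxy
        haveI : Std.Symm G.Adj := G.symm; exact List.Pairwise.forall hpw (by simpa using hx) (by simpa using hy) hxy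
      · have hnd : w.Nodup := hpw.imp (fun h => h.ne)
        rw [List.toFinset_card_of_nodup hnd, hlen]
    · rintro ⟨s, hs⟩
      refine ⟨s.toList, ?_, ?_⟩
      · simp [Finset.length_toList, hs.2]
      · refine List.Pairwise.imp_of_mem ?_ s.nodup_toList
        intro a b ha hb hab
        exact hs.1 (by simpa using ha) (by simpa using hb) hab
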